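/- Let R be a commutative ring, m, n ∈ ℕ, and θ : ℕ × ℕ → R a function satisfying: (a) for all i < m there is exactly one j < n with θ(i,j) = 1, and θ(i,j') = 0 for all other j' < n; (b) for all j < n there is exactly one i < m with θ(i,j) = 1, and θ(i',j) = 0 for all other i' < m. Then ∑_{i<m} 1 = ∑_{j<n} 1 in R (i.e. m·1_R = n·1_R). -/
import Mathlib


theorem bijective_php {R : Type*} [CommRing R] (m n : ℕ) (θ : ℕ × ℕ → R)
    (ha : ∀ i < m, ∃ j < n, θ (i, j) = 1 ∧ ∀ j' < n, j' ≠ j → θ (i, j') = 0)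
    (hb : ∀ j < n, ∃ i < m, θ (i, j) = 1 ∧ ∀ i' < m, i' ≠ i → θ (i', j) = 0) :
    ∑ i ∈ Finset.range m, (1 : R) = ∑ j ∈ Finset.range n, (1 : R) := by
  have key : ∑ i ∈ Finset.range m, ∑ j ∈ Finset.range n, θ (i, j)
      = ∑ j ∈ Finset.range n, ∑ i ∈ Finset.range m, θ (i, j) :=
    Finset.sum_comm
  calc ∑ i ∈ Finset.range m, (1 : R)
      = ∑ i ∈ Finset.range m, ∑ j ∈ Finset.range n, θ (i, j) := by
        refine Finset.sum_congr rfl fun i hi => ?_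
        obtain ⟨j, hj, h1, h0⟩ := ha i (Finset.mem_range.mp hi)
        rw [Finset.sum_eq_single_of_mem j (Finset.mem_range.mpr hj)
          (fun j' hj' hne => h0 j' (Finset.mem_range.mp hj') hne), h1]
    _ = ∑ j ∈ Finset.range n, ∑ i ∈ Finset.range m, θ (i, j) := key
    _ = ∑ j ∈ Finset.range n, (1 : R) := by
        refine Finset.sum_congr rfl fun j hj => ?_
        obtain ⟨i, hi, h1, h0⟩ := hb j (Finset.mem_range.mp hj)
        rw [Finset.sum_eq_single_of_mem i (Finset.mem_range.mpr hi)
          (fun i' hi' hne => h0 i' (Finset.mem_range.mp hi') hne), h1]
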